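/- Let N be an odd positive integer and let k be a positive integer. Then the sum of 2^(p_m + t_m), taken over all divisors m of N such that m^2 divides N*k, equals σ(N), the number of positive divisors of N. -/

import Mathlib

/-- `p_m`: the number of odd primes dividing `N*m'/m^2` but not `k/m'`, where `m' = gcd(m,k)`. -/
def pm (N k m : ℕ) : ℕ :=
  ((N * Nat.gcd m k / m ^ 2).primeFactors.filter
    (fun p => p ≠ 2 ∧ ¬ p ∣ k / Nat.gcd m k)).card

/-- `t_m`: equal to `0` if `N*m'/m^2` is odd, or `4 ∣ k/m'`, or both
`N*m'/m^2 ≡ 2 (mod 4)` and `k/m'` is odd; and equal to `1` otherwise. -/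
def tm (N k m : ℕ) : ℕ :=
  if Odd (N * Nat.gcd m k / m ^ 2) ∨ 4 ∣ k / Nat.gcd m k ∨
      ((N * Nat.gcd m k / m ^ 2) % 4 = 2 ∧ Odd (k / Nat.gcd m k)) then 0 else 1

open Finset

namespace SumOverDivisorsAux

/-- gcd is multiplicative in its first argument for coprime factors. -/
lemma gcd_mul_coprime {a b k : ℕ} (h : Nat.Coprime a b) :
    Nat.gcd (a * b) k = Nat.gcd a k * Nat.gcd b k := by
  apply Nat.dvd_antisymm
  · have h1 : Nat.gcd (a * b) k ∣
        Nat.gcd (Nat.gcd (a * b) k) a * Nat.gcd (Nat.gcd (a * b) k) b :=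
      Nat.dvd_gcd_mul_gcd_iff_dvd_mul.mpr (Nat.gcd_dvd_left _ _)
    refine h1.trans (Nat.mul_dvd_mul ?_ ?_)
    · exact Nat.dvd_gcd (Nat.gcd_dvd_right _ _)
        ((Nat.gcd_dvd_left _ _).trans (Nat.gcd_dvd_right _ _))
    · exact Nat.dvd_gcd (Nat.gcd_dvd_right _ _)
        ((Nat.gcd_dvd_left _ _).trans (Nat.gcd_dvd_right _ _))
  · refine Nat.dvd_gcd (Nat.mul_dvd_mul (Nat.gcd_dvd_left _ _) (Nat.gcd_dvd_left _ _)) ?_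
    exact ((h.coprime_dvd_left (Nat.gcd_dvd_left a k)).coprime_dvd_right
      (Nat.gcd_dvd_left b k)).mul_dvd_of_dvd_of_dvd (Nat.gcd_dvd_right _ _) (Nat.gcd_dvd_right _ _)

lemma gcd_mul_right_coprime {m₁ m₂ a : ℕ} (h₁ : m₁ ∣ a) (hcop : Nat.Coprime m₂ a) :
    Nat.gcd (m₁ * m₂) a = m₁ := by
  apply Nat.dvd_antisymm
  · have hg : Nat.Coprime (Nat.gcd (m₁ * m₂) a) m₂ :=
      (hcop.coprime_dvd_right (Nat.gcd_dvd_right (m₁ * m₂) a)).symm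
    exact (Nat.Coprime.dvd_of_dvd_mul_right hg (Nat.gcd_dvd_left _ _))
  · exact Nat.dvd_gcd (Dvd.intro m₂ rfl) h₁

lemma sq_dvd_mul_gcd {N k m : ℕ} (hm : m ∣ N) (h2 : m ^ 2 ∣ N * k) :
    m ^ 2 ∣ N * Nat.gcd m k := by
  rw [← Nat.gcd_mul_left]
  exact Nat.dvd_gcd (by rw [pow_two]; exact Nat.mul_dvd_mul hm dvd_rfl) h2

lemma Ndiv_dvd {N k m : ℕ} (hN : 0 < N) (hm0 : 0 < m) (hk : 0 < k)
    (hm : m ∣ N) (h2 : m ^ 2 ∣ N * k) : N * Nat.gcd m k / m ^ 2 ∣ N := by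
  have hg : Nat.gcd m k ∣ m ^ 2 := (Nat.gcd_dvd_left m k).trans (dvd_pow_self m two_ne_zero)
  have hgm : m ^ 2 ∣ N * Nat.gcd m k := sq_dvd_mul_gcd hm h2
  refine ⟨m ^ 2 / Nat.gcd m k, ?_⟩
  rw [Nat.div_mul_div_comm hgm hg]
  have hpos : 0 < m ^ 2 * Nat.gcd m k :=
    Nat.mul_pos (by positivity) (Nat.gcd_pos_of_pos_left k hm0)
  rw [show N * Nat.gcd m k * m ^ 2 = N * (m ^ 2 * Nat.gcd m k) by ring,
    Nat.mul_div_cancel _ hpos]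

lemma odd_of_dvd {d N : ℕ} (h : d ∣ N) (hN : Odd N) : Odd d := by
  obtain ⟨c, rfl⟩ := h
  exact (Nat.odd_mul.mp hN).1

lemma tm_eq_zero {N k m : ℕ} (hN : 0 < N) (hNodd : Odd N) (hk : 0 < k) (hm0 : 0 < m)
    (hm : m ∣ N) (h2 : m ^ 2 ∣ N * k) : tm N k m = 0 := by
  unfold tm
  rw [if_pos]
  exact Or.inl (odd_of_dvd (Ndiv_dvd hN hm0 hk hm h2) hNodd)

lemma dvd_div_iff_of_not_dvd {p d x : ℕ} (hp : p.Prime) (hpd : ¬ p ∣ d) (hdx : d ∣ x) :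
    p ∣ x / d ↔ p ∣ x := by
  constructor
  · exact fun h => h.trans (Nat.div_dvd_of_dvd hdx)
  · intro h
    rw [← Nat.mul_div_cancel' hdx] at h
    rcases (Nat.Prime.dvd_mul hp).mp h with h' | h'
    · exact absurd h' hpd
    · exact h'

/-- The key splitting lemma for `pm`. -/
lemma pm_mul {a b k m₁ m₂ : ℕ} (hab : Nat.Coprime a b) (ha : 0 < a) (hb : 0 < b) (hk : 0 < k)
    (hm₁ : m₁ ∣ a) (hm₂ : m₂ ∣ b) (h1 : m₁ ^ 2 ∣ a * k) (h2 : m₂ ^ 2 ∣ b * k) :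
    pm (a * b) k (m₁ * m₂) = pm a k m₁ + pm b k m₂ := by
  have hm₁0 : 0 < m₁ := Nat.pos_of_dvd_of_pos hm₁ ha
  have hm₂0 : 0 < m₂ := Nat.pos_of_dvd_of_pos hm₂ hb
  set g₁ := Nat.gcd m₁ k with hg₁def
  set g₂ := Nat.gcd m₂ k with hg₂def
  have hmm : Nat.Coprime m₁ m₂ := Nat.Coprime.coprime_dvd_left hm₁ (hab.coprime_dvd_right hm₂)
  have hg : Nat.gcd (m₁ * m₂) k = g₁ * g₂ := gcd_mul_coprime hmm
  have hA2 : m₁ ^ 2 ∣ a * g₁ := sq_dvd_mul_gcd hm₁ h1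
  have hB2 : m₂ ^ 2 ∣ b * g₂ := sq_dvd_mul_gcd hm₂ h2
  set A := a * g₁ / m₁ ^ 2 with hAdef
  set B := b * g₂ / m₂ ^ 2 with hBdef
  have hAdvd : A ∣ a := Ndiv_dvd ha hm₁0 hk hm₁ h1
  have hBdvd : B ∣ b := Ndiv_dvd hb hm₂0 hk hm₂ h2
  have hg₁0 : 0 < g₁ := Nat.gcd_pos_of_pos_left k hm₁0
  have hg₂0 : 0 < g₂ := Nat.gcd_pos_of_pos_left k hm₂0
  have hA0 : A ≠ 0 := by
    have : 0 < A := Nat.div_pos (Nat.le_of_dvd (Nat.mul_pos ha hg₁0) hA2) (by positivity)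
    omega
  have hB0 : B ≠ 0 := by
    have : 0 < B := Nat.div_pos (Nat.le_of_dvd (Nat.mul_pos hb hg₂0) hB2) (by positivity)
    omega
  have hABeq : a * b * (Nat.gcd (m₁ * m₂) k) / (m₁ * m₂) ^ 2 = A * B := by
    rw [hg, hAdef, hBdef, Nat.div_mul_div_comm hA2 hB2, mul_pow]
    congr 1
    ring
  have hg₁k : g₁ ∣ k := Nat.gcd_dvd_right _ _
  have hg₂k : g₂ ∣ k := Nat.gcd_dvd_right _ _
  have hg₁g₂ : Nat.Coprime g₁ g₂ :=
    (hmm.coprime_dvd_left (Nat.gcd_dvd_left m₁ k)).coprime_dvd_right (Nat.gcd_dvd_left m₂ k)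
  have hkg : k / (g₁ * g₂) = (k / g₁) / g₂ := (Nat.div_div_eq_div_mul k g₁ g₂).symm
  have hkg' : k / (g₁ * g₂) = (k / g₂) / g₁ := by
    rw [mul_comm]; exact (Nat.div_div_eq_div_mul k g₂ g₁).symm
  have hgdvd : g₁ * g₂ ∣ k := by
    rw [← hg]; exact Nat.gcd_dvd_right _ _
  have hg₂div : g₂ ∣ k / g₁ := (Nat.dvd_div_iff_mul_dvd hg₁k).mpr hgdvd
  have hg₁div : g₁ ∣ k / g₂ := (Nat.dvd_div_iff_mul_dvd hg₂k).mpr (by rwa [mul_comm])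
  have hdisj : Disjoint A.primeFactors B.primeFactors :=
    (hab.disjoint_primeFactors).mono (Nat.primeFactors_mono hAdvd (by omega))
      (Nat.primeFactors_mono hBdvd (by omega))
  have hfiltA : A.primeFactors.filter (fun p => p ≠ 2 ∧ ¬ p ∣ k / (g₁ * g₂))
      = A.primeFactors.filter (fun p => p ≠ 2 ∧ ¬ p ∣ k / g₁) := by
    apply filter_congr
    intro p hpA
    have hpprime := Nat.prime_of_mem_primeFactors hpA
    have hpg₂ : ¬ p ∣ g₂ := by
      intro hcon
      have hpa : p ∣ a := (Nat.dvd_of_mem_primeFactors hpA).trans hAdvd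
      have hpb : p ∣ b := hcon.trans ((Nat.gcd_dvd_left m₂ k).trans hm₂)
      have : p ∣ Nat.gcd a b := Nat.dvd_gcd hpa hpb
      rw [Nat.Coprime.gcd_eq_one hab] at this
      exact Nat.Prime.ne_one hpprime (Nat.eq_one_of_dvd_one this)
    rw [hkg, dvd_div_iff_of_not_dvd hpprime hpg₂ hg₂div]
  have hfiltB : B.primeFactors.filter (fun p => p ≠ 2 ∧ ¬ p ∣ k / (g₁ * g₂))
      = B.primeFactors.filter (fun p => p ≠ 2 ∧ ¬ p ∣ k / g₂) := by
    apply filter_congr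
    intro p hpB
    have hpprime := Nat.prime_of_mem_primeFactors hpB
    have hpg₁ : ¬ p ∣ g₁ := by
      intro hcon
      have hpb : p ∣ b := (Nat.dvd_of_mem_primeFactors hpB).trans hBdvd
      have hpa : p ∣ a := hcon.trans ((Nat.gcd_dvd_left m₁ k).trans hm₁)
      have : p ∣ Nat.gcd a b := Nat.dvd_gcd hpa hpb
      rw [Nat.Coprime.gcd_eq_one hab] at this
      exact Nat.Prime.ne_one hpprime (Nat.eq_one_of_dvd_one this)
    rw [hkg', dvd_div_iff_of_not_dvd hpprime hpg₁ hg₁div]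
  unfold pm
  rw [hABeq, Nat.primeFactors_mul hA0 hB0, filter_union, hg,
    card_union_of_disjoint (hdisj.mono (filter_subset _ _) (filter_subset _ _)),
    hfiltA, hfiltB]

/-- The elementary counting identity at a single prime. -/
lemma sum_arith (n c : ℕ) :
    ∑ b ∈ Finset.range (n + 1),
      (if 2 * b ≤ n + c then (if c ≤ b ∧ 2 * b < n + c then 2 else 1) else 0) = n + 1 := by
  set f : ℕ → ℕ :=
    fun b => if 2 * b ≤ n + c then (if c ≤ b ∧ 2 * b < n + c then 2 else 1) else 0 with hf
  rcases le_or_gt n c with h | h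
  · have : ∀ b ∈ Finset.range (n + 1), f b = 1 := by
      intro b hb
      rw [Finset.mem_range] at hb
      rw [hf]
      simp only
      rw [if_pos (by omega), if_neg (by omega)]
    rw [Finset.sum_congr rfl this, Finset.sum_const, Finset.card_range, smul_eq_mul, mul_one]
  · set L := (n + c) / 2 with hL
    have hcL : c ≤ L := by omega
    have hLn : L + 1 ≤ n + 1 := by omega
    rw [Finset.range_eq_Ico, ← Finset.sum_Ico_consecutive f (Nat.zero_le (L + 1)) hLn,
      ← Finset.sum_Ico_consecutive f (Nat.zero_le c) (by omega : c ≤ L + 1)]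
    have hs3 : ∑ b ∈ Finset.Ico (L + 1) (n + 1), f b = 0 := by
      apply Finset.sum_eq_zero
      intro b hb
      rw [Finset.mem_Ico] at hb
      rw [hf]
      simp only
      rw [if_neg (by omega)]
    have hs1 : ∑ b ∈ Finset.Ico 0 c, f b = c := by
      have : ∀ b ∈ Finset.Ico 0 c, f b = 1 := by
        intro b hb
        rw [Finset.mem_Ico] at hb
        rw [hf]
        simp only
        rw [if_pos (by omega), if_neg (by omega)]
      rw [Finset.sum_congr rfl this, Finset.sum_const, Nat.card_Ico, smul_eq_mul, mul_one,
        Nat.sub_zero]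
    rcases Nat.even_or_odd (n + c) with he | ho
    · obtain ⟨t, ht⟩ := he
      rw [Finset.sum_Ico_succ_top hcL]
      have hfL : f L = 1 := by
        rw [hf]; simp only
        rw [if_pos (by omega), if_neg (by omega)]
      have hmid : ∑ b ∈ Finset.Ico c L, f b = 2 * (L - c) := by
        have : ∀ b ∈ Finset.Ico c L, f b = 2 := by
          intro b hb
          rw [Finset.mem_Ico] at hb
          rw [hf]; simp only
          rw [if_pos (by omega), if_pos (by omega)]
        rw [Finset.sum_congr rfl this, Finset.sum_const, Nat.card_Ico, smul_eq_mul, mul_comm]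
      rw [hs1, hs3, hfL, hmid]
      omega
    · obtain ⟨t, ht⟩ := ho
      have hmid : ∑ b ∈ Finset.Ico c (L + 1), f b = 2 * (L + 1 - c) := by
        have : ∀ b ∈ Finset.Ico c (L + 1), f b = 2 := by
          intro b hb
          rw [Finset.mem_Ico] at hb
          rw [hf]; simp only
          rw [if_pos (by omega), if_pos (by omega)]
        rw [Finset.sum_congr rfl this, Finset.sum_const, Nat.card_Ico, smul_eq_mul, mul_comm]
      rw [hs1, hs3, hmid]
      omega

lemma gcd_prime_pow {p b k : ℕ} (hp : p.Prime) (hk : k ≠ 0) :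
    Nat.gcd (p ^ b) k = p ^ (min b (k.factorization p)) := by
  obtain ⟨j, hj, hg⟩ := (Nat.dvd_prime_pow hp).mp (Nat.gcd_dvd_left (p ^ b) k)
  have hjk : p ^ j ∣ k := hg ▸ Nat.gcd_dvd_right _ _
  have hjc : j ≤ k.factorization p := (Nat.Prime.pow_dvd_iff_le_factorization hp hk).mp hjk
  have hmin : p ^ (min b (k.factorization p)) ∣ Nat.gcd (p ^ b) k :=
    Nat.dvd_gcd (pow_dvd_pow p (min_le_left _ _))
      ((pow_dvd_pow p (min_le_right _ _)).trans (Nat.ordProj_dvd k p))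
  rw [hg] at hmin ⊢
  have hle := (Nat.pow_dvd_pow_iff_le_right hp.one_lt).mp hmin
  congr 1
  omega

lemma prime_pow_case {p k : ℕ} (hp : p.Prime) (hodd : Odd p) (hk : 0 < k) (n : ℕ) :
    ∑ m ∈ (p ^ n).divisors.filter (fun m => m ^ 2 ∣ p ^ n * k),
        2 ^ (pm (p ^ n) k m + tm (p ^ n) k m) = (p ^ n).divisors.card := by
  have hk0 : k ≠ 0 := hk.ne'
  have hp1 : 1 < p := hp.one_lt
  have hp0 : 0 < p := hp.pos
  set c := k.factorization p with hc
  have hcard : (p ^ n).divisors.card = n + 1 := by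
    rw [Nat.divisors_prime_pow hp, Finset.card_map, Finset.card_range]
  rw [Finset.sum_filter, Nat.sum_divisors_prime_pow hp, hcard]
  refine Eq.trans (Finset.sum_congr rfl fun b hb => ?_) (sum_arith n c)
  rw [Finset.mem_range] at hb
  have hble : b ≤ n := by omega
  have hfac : (p ^ n * k).factorization p = n + c := by
    rw [Nat.factorization_mul (by positivity) hk0]
    simp [hp.factorization_pow, hc]
  have hdvd : ((p ^ b) ^ 2 ∣ p ^ n * k) ↔ 2 * b ≤ n + c := by
    rw [← pow_mul, Nat.Prime.pow_dvd_iff_le_factorization hp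
      (Nat.mul_ne_zero (by positivity) hk0), hfac]
    omega
  by_cases h2b : 2 * b ≤ n + c
  · rw [if_pos (hdvd.mpr h2b), if_pos h2b]
    have hgcd : Nat.gcd (p ^ b) k = p ^ (min b c) := gcd_prime_pow hp hk0
    have hdvdk : p ^ (min b c) ∣ k :=
      (pow_dvd_pow p (min_le_right _ _)).trans (Nat.ordProj_dvd k p)
    have hkdiv : p ∣ k / p ^ (min b c) ↔ min b c < c := by
      have hne : k / p ^ (min b c) ≠ 0 := by
        have := Nat.div_pos (Nat.le_of_dvd hk hdvdk) (by positivity)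
        omega
      rw [Nat.Prime.dvd_iff_one_le_factorization hp hne, Nat.factorization_div hdvdk,
        Finsupp.tsub_apply, hp.factorization_pow, Finsupp.single_eq_same, ← hc]
      omega
    have hpm : pm (p ^ n) k (p ^ b) = if c ≤ b ∧ 2 * b < n + c then 1 else 0 := by
      unfold pm
      rw [hgcd, ← pow_add, ← pow_mul, Nat.pow_div (by omega) hp0]
      rcases Nat.eq_zero_or_pos (n + min b c - b * 2) with he | he
      · rw [he, pow_zero]
        simp only [Nat.primeFactors_one, Finset.filter_empty, Finset.card_empty]
        rw [if_neg (by omega)]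
      · rw [Nat.primeFactors_pow _ (by omega), Nat.Prime.primeFactors hp,
          Finset.filter_singleton]
        have hp2 : p ≠ 2 := by
          rcases hodd with ⟨t, ht⟩; omega
        by_cases hcb : c ≤ b
        · rw [if_pos ⟨hp2, by rw [hkdiv]; omega⟩, Finset.card_singleton,
            if_pos ⟨hcb, by omega⟩]
        · rw [if_neg, Finset.card_empty, if_neg (by omega)]
          rintro ⟨-, hnd⟩
          exact hnd (hkdiv.mpr (by omega))
    have htm : tm (p ^ n) k (p ^ b) = 0 :=
      tm_eq_zero (by positivity) (hodd.pow) hk (by positivity)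
        (pow_dvd_pow p hble) (hdvd.mpr h2b)
    rw [htm, hpm]
    split_ifs <;> norm_num
  · rw [if_neg (fun hcon => h2b (hdvd.mp hcon)), if_neg h2b]

end SumOverDivisorsAux

theorem sum_over_divisors_odd_case (N k : ℕ) (hN : 0 < N) (hNodd : Odd N) (hk : 0 < k) :
    ∑ m ∈ N.divisors.filter (fun m => m ^ 2 ∣ N * k), 2 ^ (pm N k m + tm N k m)
      = N.divisors.card := by
  clear hN
  revert hNodd
  induction N using Nat.recOnPosPrimePosCoprime with
  | prime_pow p n hpp hn =>
    intro hodd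
    have hp' : p.Prime := hpp
    have hpodd : Odd p := by
      rcases Nat.Prime.eq_two_or_odd' hp' with h2 | h
      · exfalso
        rw [h2] at hodd
        obtain ⟨s, hs⟩ := dvd_pow_self 2 hn.ne'
        rcases hodd with ⟨t, ht⟩
        omega
      · exact h
    exact SumOverDivisorsAux.prime_pow_case hp' hpodd hk n
  | zero =>
    intro hodd
    simp [Nat.odd_iff] at hodd
  | one =>
    intro _
    rw [Nat.divisors_one, Finset.filter_singleton, if_pos (by simp),
      Finset.sum_singleton, Finset.card_singleton]
    have hpm : pm 1 k 1 = 0 := by simp [pm]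
    have htm : tm 1 k 1 = 0 := by simp [tm]
    rw [hpm, htm]
    norm_num
  | coprime a b ha hb hab iha ihb =>
    intro hodd
    obtain ⟨hodda, hoddb⟩ := Nat.odd_mul.mp hodd
    have ha0 : 0 < a := by omega
    have hb0 : 0 < b := by omega
    rw [hab.card_divisors_mul, ← iha hodda, ← ihb hoddb, Finset.sum_mul_sum,
      ← Finset.sum_product']
    -- facts common to both directions
    have key : ∀ m₁ m₂ : ℕ, m₁ ∣ a → m₂ ∣ b → m₁ ^ 2 ∣ a * k → m₂ ^ 2 ∣ b * k →
        (m₁ * m₂) ^ 2 ∣ a * b * k := by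
      intro m₁ m₂ hm₁ hm₂ h1 h2
      have hcop : Nat.Coprime (m₁ ^ 2) (m₂ ^ 2) :=
        ((hab.coprime_dvd_left hm₁).coprime_dvd_right hm₂).pow 2 2
      rw [mul_pow]
      refine hcop.mul_dvd_of_dvd_of_dvd (h1.trans ⟨b, by ring⟩) (h2.trans ⟨a, by ring⟩)
    refine Finset.sum_nbij' (fun m => (Nat.gcd m a, Nat.gcd m b)) (fun q => q.1 * q.2)
      ?_ ?_ ?_ ?_ ?_
    · -- maps into product set
      intro m hm
      rw [Finset.mem_filter, Nat.mem_divisors] at hm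
      obtain ⟨⟨hmab, -⟩, hQ⟩ := hm
      have h1 : (Nat.gcd m a) ^ 2 ∣ a * k := by
        have hcop : Nat.Coprime ((Nat.gcd m a) ^ 2) b :=
          Nat.Coprime.pow_left _ ((hab.coprime_dvd_left (Nat.gcd_dvd_right m a)))
        have hd : (Nat.gcd m a) ^ 2 ∣ a * k * b := by
          refine ((pow_dvd_pow_of_dvd (Nat.gcd_dvd_left m a) 2).trans hQ).trans ⟨1, by ring⟩
        exact hcop.dvd_of_dvd_mul_right hd
      have h2 : (Nat.gcd m b) ^ 2 ∣ b * k := by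
        have hcop : Nat.Coprime ((Nat.gcd m b) ^ 2) a :=
          Nat.Coprime.pow_left _ ((hab.symm.coprime_dvd_left (Nat.gcd_dvd_right m b)))
        have hd : (Nat.gcd m b) ^ 2 ∣ b * k * a := by
          refine ((pow_dvd_pow_of_dvd (Nat.gcd_dvd_left m b) 2).trans hQ).trans ⟨1, by ring⟩
        exact hcop.dvd_of_dvd_mul_right hd
      rw [Finset.mem_product, Finset.mem_filter, Finset.mem_filter,
        Nat.mem_divisors, Nat.mem_divisors]
      exact ⟨⟨⟨Nat.gcd_dvd_right m a, ha0.ne'⟩, h1⟩, ⟨⟨Nat.gcd_dvd_right m b, hb0.ne'⟩, h2⟩⟩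
    · -- reverse map
      rintro ⟨m₁, m₂⟩ hq
      rw [Finset.mem_product, Finset.mem_filter, Finset.mem_filter,
        Nat.mem_divisors, Nat.mem_divisors] at hq
      obtain ⟨⟨⟨hm₁, -⟩, h1⟩, ⟨hm₂, -⟩, h2⟩ := hq
      rw [Finset.mem_filter, Nat.mem_divisors]
      exact ⟨⟨Nat.mul_dvd_mul hm₁ hm₂, by positivity⟩, key m₁ m₂ hm₁ hm₂ h1 h2⟩
    · -- left inverse
      intro m hm
      rw [Finset.mem_filter, Nat.mem_divisors] at hm
      exact (Nat.gcd_mul_gcd_eq_iff_dvd_mul_of_coprime hab).mpr hm.1.1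
    · -- right inverse
      rintro ⟨m₁, m₂⟩ hq
      rw [Finset.mem_product, Finset.mem_filter, Finset.mem_filter,
        Nat.mem_divisors, Nat.mem_divisors] at hq
      obtain ⟨⟨⟨hm₁, -⟩, h1⟩, ⟨hm₂, -⟩, h2⟩ := hq
      have e1 : Nat.gcd (m₁ * m₂) a = m₁ :=
        SumOverDivisorsAux.gcd_mul_right_coprime hm₁ (hab.symm.coprime_dvd_left hm₂)
      have e2 : Nat.gcd (m₁ * m₂) b = m₂ := by
        rw [mul_comm]
        exact SumOverDivisorsAux.gcd_mul_right_coprime hm₂ (hab.coprime_dvd_left hm₁)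
      simp [e1, e2]
    · -- values agree
      intro m hm
      rw [Finset.mem_filter, Nat.mem_divisors] at hm
      obtain ⟨⟨hmab, -⟩, hQ⟩ := hm
      have hprod : Nat.gcd m a * Nat.gcd m b = m :=
        (Nat.gcd_mul_gcd_eq_iff_dvd_mul_of_coprime hab).mpr hmab
      have hm₁ : Nat.gcd m a ∣ a := Nat.gcd_dvd_right m a
      have hm₂ : Nat.gcd m b ∣ b := Nat.gcd_dvd_right m b
      have h1 : (Nat.gcd m a) ^ 2 ∣ a * k := by
        have hcop : Nat.Coprime ((Nat.gcd m a) ^ 2) b :=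
          Nat.Coprime.pow_left _ ((hab.coprime_dvd_left hm₁))
        have hd : (Nat.gcd m a) ^ 2 ∣ a * k * b :=
          ((pow_dvd_pow_of_dvd (Nat.gcd_dvd_left m a) 2).trans hQ).trans ⟨1, by ring⟩
        exact hcop.dvd_of_dvd_mul_right hd
      have h2 : (Nat.gcd m b) ^ 2 ∣ b * k := by
        have hcop : Nat.Coprime ((Nat.gcd m b) ^ 2) a :=
          Nat.Coprime.pow_left _ ((hab.symm.coprime_dvd_left hm₂))
        have hd : (Nat.gcd m b) ^ 2 ∣ b * k * a :=
          ((pow_dvd_pow_of_dvd (Nat.gcd_dvd_left m b) 2).trans hQ).trans ⟨1, by ring⟩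
        exact hcop.dvd_of_dvd_mul_right hd
      have hm0 : 0 < m := Nat.pos_of_dvd_of_pos hmab (by positivity)
      have htm0 : tm (a * b) k m = 0 :=
        SumOverDivisorsAux.tm_eq_zero (by positivity) hodd hk hm0 hmab hQ
      have htm1 : tm a k (Nat.gcd m a) = 0 :=
        SumOverDivisorsAux.tm_eq_zero ha0 hodda hk
          (Nat.pos_of_dvd_of_pos hm₁ ha0) hm₁ h1
      have htm2 : tm b k (Nat.gcd m b) = 0 :=
        SumOverDivisorsAux.tm_eq_zero hb0 hoddb hk
          (Nat.pos_of_dvd_of_pos hm₂ hb0) hm₂ h2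
      have hpmm : pm (a * b) k m = pm a k (Nat.gcd m a) + pm b k (Nat.gcd m b) := by
        conv_lhs => rw [← hprod]
        exact SumOverDivisorsAux.pm_mul hab ha0 hb0 hk hm₁ hm₂ h1 h2
      rw [htm0, htm1, htm2, hpmm, Nat.add_zero, Nat.add_zero, Nat.add_zero, pow_add]
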